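/- Let ρ be an SL(3,ℂ)-structure on a 6-manifold, p a point, v ∈ T_pM nonzero, J = J_ρ. Set ω₁ = ρ_p(v,·,·) and ω₂ = ρ_p(J_p v,·,·). Then ker ω₁ = ker ω₂ = span{v, J_p v}, and ω_i ∧ ω_j = δ_{ij} ω₁² for i,j ∈ {1,2}. -/

import Mathlib

open Module

/-- Wedge product of `k` covectors, as an alternating `k`-form (determinant convention). -/
noncomputable def wedgeCov {V : Type*} [AddCommGroup V] [Module ℝ V] {k : ℕ}
    (f : Fin k → Module.Dual ℝ V) : V [⋀^Fin k]→ₗ[ℝ] ℝ :=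
  Matrix.detRowAlternating.compLinearMap (LinearMap.pi f)

/-- Wedge product of alternating forms (shuffle convention, compatible with `wedgeCov`). -/
noncomputable def aw {V : Type*} [AddCommGroup V] [Module ℝ V] {a b : ℕ}
    (ω : V [⋀^Fin a]→ₗ[ℝ] ℝ) (σ : V [⋀^Fin b]→ₗ[ℝ] ℝ) : V [⋀^Fin (a + b)]→ₗ[ℝ] ℝ :=
  ((TensorProduct.lid ℝ ℝ).toLinearMap.compAlternatingMap (ω.domCoprod σ)).domDomCongr
    finSumFinEquiv

/-- The `i`-th coordinate covector on `Fin n → ℝ`. -/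
noncomputable def pr {n : ℕ} (i : Fin n) : Module.Dual ℝ (Fin n → ℝ) := LinearMap.proj i

/-- The model `SL(3,ℂ)` three-form `ρ₀ = e¹³⁵ − e¹⁴⁶ − e²³⁶ − e²⁴⁵` on `ℝ⁶` (0-based indices). -/
noncomputable def rho0 : (Fin 6 → ℝ) [⋀^Fin 3]→ₗ[ℝ] ℝ :=
  wedgeCov ![pr 0, pr 2, pr 4] - wedgeCov ![pr 0, pr 3, pr 5] - wedgeCov ![pr 1, pr 2, pr 5] -
    wedgeCov ![pr 1, pr 3, pr 4]

/-- A three-form on a real vector space is an `SL(3,ℂ)`-structure if it is linearly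
equivalent to the model form `ρ₀`. -/
def IsSL3 {V : Type*} [AddCommGroup V] [Module ℝ V] (ρ : V [⋀^Fin 3]→ₗ[ℝ] ℝ) : Prop :=
  ∃ u : V ≃ₗ[ℝ] (Fin 6 → ℝ), ρ = rho0.compLinearMap u.toLinearMap

/-- The model almost complex structure adapted to `ρ₀`:
`J₀ f₁ = −f₂, J₀ f₂ = f₁, J₀ f₃ = −f₄, J₀ f₄ = f₃, J₀ f₅ = −f₆, J₀ f₆ = f₅`. -/
noncomputable def Jmodel : (Fin 6 → ℝ) →ₗ[ℝ] (Fin 6 → ℝ) :=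
  Matrix.toLin' !![0,1,0,0,0,0; -1,0,0,0,0,0; 0,0,0,1,0,0; 0,0,-1,0,0,0;
    0,0,0,0,0,1; 0,0,0,0,-1,0]

/-- `J` is the almost complex structure induced by the `SL(3,ℂ)`-structure `ρ`:
in an(y) adapted basis for `ρ`, `J` is given by the model complex structure. -/
def IsInducedJ {V : Type*} [AddCommGroup V] [Module ℝ V] (ρ : V [⋀^Fin 3]→ₗ[ℝ] ℝ)
    (J : V →ₗ[ℝ] V) : Prop :=
  ∃ u : V ≃ₗ[ℝ] (Fin 6 → ℝ), ρ = rho0.compLinearMap u.toLinearMap ∧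
    ∀ x : V, J x = u.symm (Jmodel (u x))

/-- The wedge product of two 2-forms (given as functions of two vectors), evaluated
on four vectors. -/
noncomputable def sh2 {V : Type*} (f g : V → V → ℝ) (a b c d : V) : ℝ :=
  f a b * g c d - f a c * g b d + f a d * g b c + f b c * g a d - f b d * g a c +
    f c d * g a b

section ModelLemmas

lemma fin5succ : (5 : Fin 6) = Fin.succ 4 := rfl

lemma fin5succ' : (Fin.succ 4 : Fin 6) = 5 := rfl

lemma fm0 : (⟨0, by norm_num⟩ : Fin 6) = 0 := rfl
lemma fm1 : (⟨1, by norm_num⟩ : Fin 6) = 1 := rfl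
lemma fm2 : (⟨2, by norm_num⟩ : Fin 6) = 2 := rfl
lemma fm3 : (⟨3, by norm_num⟩ : Fin 6) = 3 := rfl
lemma fm4 : (⟨4, by norm_num⟩ : Fin 6) = 4 := rfl
lemma fm5 : (⟨5, by norm_num⟩ : Fin 6) = 5 := rfl

lemma wedgeCov_apply' {V : Type*} [AddCommGroup V] [Module ℝ V] {k : ℕ}
    (f : Fin k → Module.Dual ℝ V) (v : Fin k → V) :
    wedgeCov f v = Matrix.det (Matrix.of fun j i => f i (v j)) := rfl

lemma rho0_apply (x y z : Fin 6 → ℝ) :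
    rho0 ![x,y,z] =
      (x 0 * (y 2 * z 4 - y 4 * z 2) - x 2 * (y 0 * z 4 - y 4 * z 0) + x 4 * (y 0 * z 2 - y 2 * z 0))
    - (x 0 * (y 3 * z 5 - y 5 * z 3) - x 3 * (y 0 * z 5 - y 5 * z 0) + x 5 * (y 0 * z 3 - y 3 * z 0))
    - (x 1 * (y 2 * z 5 - y 5 * z 2) - x 2 * (y 1 * z 5 - y 5 * z 1) + x 5 * (y 1 * z 2 - y 2 * z 1))
    - (x 1 * (y 3 * z 4 - y 4 * z 3) - x 3 * (y 1 * z 4 - y 4 * z 1) + x 4 * (y 1 * z 3 - y 3 * z 1)) := by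
  simp [rho0, wedgeCov_apply', pr, Matrix.det_fin_three, fin5succ, Matrix.cons_val_succ]
  ring

lemma Jmodel_apply (w : Fin 6 → ℝ) :
    Jmodel w = ![w 1, -w 0, w 3, -w 2, w 5, -w 4] := by
  funext i
  fin_cases i <;>
    simp [Jmodel, Matrix.toLin'_apply, Matrix.mulVec, dotProduct, Fin.sum_univ_six,
      fin5succ, Matrix.cons_val_succ] <;> rfl

lemma Jmodel_Jmodel (w : Fin 6 → ℝ) : Jmodel (Jmodel w) = -w := by
  rw [Jmodel_apply, Jmodel_apply]
  funext i
  fin_cases i <;> simp [fin5succ, Matrix.cons_val_succ]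

lemma Jmodel_ne_zero {w : Fin 6 → ℝ} (hw : w ≠ 0) : Jmodel w ≠ 0 := by
  intro h
  apply hw
  have h2 := Jmodel_Jmodel w
  rw [h, map_zero] at h2
  simpa [neg_eq_zero] using h2.symm

lemma model_mem_ker (w x : Fin 6 → ℝ) (hx : x ∈ Submodule.span ℝ {w, Jmodel w}) :
    ∀ y, rho0 ![w, x, y] = 0 := by
  rw [Submodule.mem_span_pair] at hx
  obtain ⟨a, b, rfl⟩ := hx
  intro y
  rw [rho0_apply]
  simp only [Pi.add_apply, Pi.smul_apply, smul_eq_mul, Jmodel_apply]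
  simp only [fin5succ, Matrix.cons_val_succ, Matrix.cons_val_zero, Matrix.cons_val_one,
    Matrix.head_cons, Matrix.cons_val]
  try simp only [fin5succ']
  norm_num
  ring

lemma model_ker (w : Fin 6 → ℝ) (hw : w ≠ 0) :
    {x : Fin 6 → ℝ | ∀ y, rho0 ![w, x, y] = 0}
      = (Submodule.span ℝ {w, Jmodel w} : Set (Fin 6 → ℝ)) := by
  ext x
  simp only [Set.mem_setOf_eq, SetLike.mem_coe]
  constructor
  · intro h
    have h0 : w 2 * x 4 - w 3 * x 5 - w 4 * x 2 + w 5 * x 3 = 0 := by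
      have h' := h ![1,0,0,0,0,0]
      rw [rho0_apply] at h'
      simp [fin5succ, Matrix.cons_val_succ] at h'
      try simp only [fin5succ'] at h'
      first | linear_combination h' | linear_combination -h'
    have h1 : - (w 2 * x 5) - w 3 * x 4 + w 4 * x 3 + w 5 * x 2 = 0 := by
      have h' := h ![0,1,0,0,0,0]
      rw [rho0_apply] at h'
      simp [fin5succ, Matrix.cons_val_succ] at h'
      try simp only [fin5succ'] at h'
      first | linear_combination h' | linear_combination -h'
    have h2 : - (w 0 * x 4) + w 1 * x 5 + w 4 * x 0 - w 5 * x 1 = 0 := by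
      have h' := h ![0,0,1,0,0,0]
      rw [rho0_apply] at h'
      simp [fin5succ, Matrix.cons_val_succ] at h'
      try simp only [fin5succ'] at h'
      first | linear_combination h' | linear_combination -h'
    have h3 : w 0 * x 5 + w 1 * x 4 - w 4 * x 1 - w 5 * x 0 = 0 := by
      have h' := h ![0,0,0,1,0,0]
      rw [rho0_apply] at h'
      simp [fin5succ, Matrix.cons_val_succ] at h'
      try simp only [fin5succ'] at h'
      first | linear_combination h' | linear_combination -h'
    have h4 : w 0 * x 2 - w 1 * x 3 - w 2 * x 0 + w 3 * x 1 = 0 := by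
      have h' := h ![0,0,0,0,1,0]
      rw [rho0_apply] at h'
      simp [fin5succ, Matrix.cons_val_succ] at h'
      try simp only [fin5succ'] at h'
      first | linear_combination h' | linear_combination -h'
    have h5 : - (w 0 * x 3) - w 1 * x 2 + w 2 * x 1 + w 3 * x 0 = 0 := by
      have h' := h ![0,0,0,0,0,1]
      rw [rho0_apply] at h'
      simp [fin5succ, Matrix.cons_val_succ] at h'
      try simp only [fin5succ'] at h'
      first | linear_combination h' | linear_combination -h'
    obtain ⟨i, hi⟩ : ∃ i, w i ≠ 0 := by
      by_contra hc
      push_neg at hc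
      exact hw (funext fun i => hc i)
    have hQ : (0:ℝ) < ∑ j, w j ^ 2 :=
      Finset.sum_pos' (fun j _ => sq_nonneg _) ⟨i, Finset.mem_univ i, pow_two_pos_of_ne_zero hi⟩
    rw [Fin.sum_univ_six] at hQ
    have hQ0 : w 0 ^ 2 + w 1 ^ 2 + w 2 ^ 2 + w 3 ^ 2 + w 4 ^ 2 + w 5 ^ 2 ≠ 0 := ne_of_gt hQ
    rw [Submodule.mem_span_pair]
    refine ⟨(x 0*w 0 + x 1*w 1 + x 2*w 2 + x 3*w 3 + x 4*w 4 + x 5*w 5) /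
        (w 0 ^ 2 + w 1 ^ 2 + w 2 ^ 2 + w 3 ^ 2 + w 4 ^ 2 + w 5 ^ 2),
      (x 0*w 1 - x 1*w 0 + x 2*w 3 - x 3*w 2 + x 4*w 5 - x 5*w 4) /
        (w 0 ^ 2 + w 1 ^ 2 + w 2 ^ 2 + w 3 ^ 2 + w 4 ^ 2 + w 5 ^ 2), ?_⟩
    funext j
    simp only [Pi.add_apply, Pi.smul_apply, smul_eq_mul, Jmodel_apply]
    fin_cases j <;>
      simp only [fm0, fm1, fm2, fm3, fm4, fm5, fin5succ, Matrix.cons_val_succ,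
        Matrix.cons_val_zero, Matrix.cons_val_one, Matrix.head_cons, Matrix.cons_val] <;>
      simp only [fin5succ'] <;>
      field_simp
    · first
      | linear_combination w 4 * h2 - w 5 * h3 - w 2 * h4 + w 3 * h5
      | linear_combination -(w 4 * h2) + w 5 * h3 + w 2 * h4 - w 3 * h5
    · first
      | linear_combination -(w 5 * h2) - w 4 * h3 + w 3 * h4 + w 2 * h5
      | linear_combination w 5 * h2 + w 4 * h3 - w 3 * h4 - w 2 * h5
    · first
      | linear_combination -(w 4 * h0) + w 5 * h1 + w 0 * h4 - w 1 * h5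
      | linear_combination w 4 * h0 - w 5 * h1 - w 0 * h4 + w 1 * h5
    · first
      | linear_combination w 5 * h0 + w 4 * h1 - w 1 * h4 - w 0 * h5
      | linear_combination -(w 5 * h0) - w 4 * h1 + w 1 * h4 + w 0 * h5
    · first
      | linear_combination w 2 * h0 - w 3 * h1 - w 0 * h2 + w 1 * h3
      | linear_combination -(w 2 * h0) + w 3 * h1 + w 0 * h2 - w 1 * h3
    · first
      | linear_combination -(w 3 * h0) - w 2 * h1 + w 1 * h2 + w 0 * h3
      | linear_combination w 3 * h0 + w 2 * h1 - w 1 * h2 - w 0 * h3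
  · exact model_mem_ker w x

set_option maxHeartbeats 4000000 in
lemma modelW1 (w a b c d : Fin 6 → ℝ) :
    sh2 (fun x y => rho0 ![w, x, y]) (fun x y => rho0 ![Jmodel w, x, y]) a b c d = 0 := by
  rw [sh2, Jmodel_apply]
  simp only [rho0_apply]
  simp only [fin5succ, Matrix.cons_val_succ, Matrix.cons_val_zero, Matrix.cons_val_one,
    Matrix.cons_val_two, Matrix.cons_val_three, Matrix.cons_val_four,
    Matrix.head_cons, Matrix.tail_cons]
  try simp only [fin5succ']
  ring

set_option maxHeartbeats 4000000 in
lemma modelW2 (w a b c d : Fin 6 → ℝ) :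
    sh2 (fun x y => rho0 ![Jmodel w, x, y]) (fun x y => rho0 ![Jmodel w, x, y]) a b c d =
      sh2 (fun x y => rho0 ![w, x, y]) (fun x y => rho0 ![w, x, y]) a b c d := by
  rw [sh2, sh2, Jmodel_apply]
  simp only [rho0_apply]
  simp only [fin5succ, Matrix.cons_val_succ, Matrix.cons_val_zero, Matrix.cons_val_one,
    Matrix.cons_val_two, Matrix.cons_val_three, Matrix.cons_val_four,
    Matrix.head_cons, Matrix.tail_cons]
  try simp only [fin5succ']
  ring

end ModelLemmas
/-!  STATEMENT 7.  Let `ρ` be an `SL(3,ℂ)`-structure with induced almost complex structure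
`J = J_ρ` on a six-dimensional space, `v ≠ 0`, and set `ω₁ = ρ(v,·,·)`, `ω₂ = ρ(Jv,·,·)`.
Then `ker ω₁ = ker ω₂ = span{v, Jv}` and `ω_i ∧ ω_j = δ_{ij} ω₁²` for `i, j ∈ {1,2}`. -/

theorem sl3c_contraction_kernel_and_wedge
    {V : Type*} [AddCommGroup V] [Module ℝ V]
    (ρ : V [⋀^Fin 3]→ₗ[ℝ] ℝ) (J : V →ₗ[ℝ] V) (hJ : IsInducedJ ρ J)
    (v : V) (hv : v ≠ 0) :
    {x : V | ∀ y : V, ρ ![v, x, y] = 0} = (Submodule.span ℝ {v, J v} : Set V) ∧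
    {x : V | ∀ y : V, ρ ![J v, x, y] = 0} = (Submodule.span ℝ {v, J v} : Set V) ∧
    (∀ a b c d : V,
      sh2 (fun x y => ρ ![v, x, y]) (fun x y => ρ ![J v, x, y]) a b c d = 0) ∧
    (∀ a b c d : V,
      sh2 (fun x y => ρ ![J v, x, y]) (fun x y => ρ ![J v, x, y]) a b c d =
        sh2 (fun x y => ρ ![v, x, y]) (fun x y => ρ ![v, x, y]) a b c d) := by
  obtain ⟨u, hρ, hJu⟩ := hJ
  have evalρ : ∀ p q r : V, ρ ![p, q, r] = rho0 ![u p, u q, u r] := by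
    intro p q r
    rw [hρ]
    rw [AlternatingMap.compLinearMap_apply]
    congr 1
    funext i; fin_cases i <;> rfl
  have huv : u v ≠ 0 := fun h => hv (by simpa using congrArg u.symm h)
  have huJ : u (J v) = Jmodel (u v) := by rw [hJu v]; simp
  have hJv : J v ≠ 0 := by
    intro h
    exact Jmodel_ne_zero huv (by rw [← huJ, h, map_zero])
  have hJJ : u.symm (Jmodel (u (J v))) = -v := by
    rw [huJ, Jmodel_Jmodel, map_neg]; simp
  have ker_gen : ∀ z : V, z ≠ 0 →
      {x : V | ∀ y : V, ρ ![z, x, y] = 0}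
        = (Submodule.span ℝ {z, u.symm (Jmodel (u z))} : Set V) := by
    intro z hz
    have hz' : u z ≠ 0 := fun h => hz (by simpa using congrArg u.symm h)
    ext x
    simp only [Set.mem_setOf_eq, SetLike.mem_coe]
    have step1 : (∀ y : V, ρ ![z, x, y] = 0) ↔
        (∀ y' : Fin 6 → ℝ, rho0 ![u z, u x, y'] = 0) := by
      constructor
      · intro h y'
        have hh := h (u.symm y')
        rwa [evalρ, u.apply_symm_apply] at hh
      · intro h y
        rw [evalρ]; exact h (u y)
    rw [step1]
    have step2 : (∀ y', rho0 ![u z, u x, y'] = 0) ↔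
        u x ∈ Submodule.span ℝ {u z, Jmodel (u z)} := by
      constructor
      · intro h
        have hm : u x ∈ {t : Fin 6 → ℝ | ∀ y, rho0 ![u z, t, y] = 0} := h
        rwa [model_ker (u z) hz'] at hm
      · intro hmem y'
        exact model_mem_ker _ _ hmem y'
    rw [step2, Submodule.mem_span_pair, Submodule.mem_span_pair]
    constructor
    · rintro ⟨a, b, hab⟩
      refine ⟨a, b, ?_⟩
      apply u.injective
      rw [map_add, map_smul, map_smul, u.apply_symm_apply, hab]
    · rintro ⟨a, b, hab⟩
      refine ⟨a, b, ?_⟩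
      have hh := congrArg u hab
      rwa [map_add, map_smul, map_smul, u.apply_symm_apply] at hh
  refine ⟨?_, ?_, ?_, ?_⟩
  · rw [ker_gen v hv, ← hJu v]
  · rw [ker_gen (J v) hJv, hJJ]
    have hsp : Submodule.span ℝ {J v, -v} = Submodule.span ℝ {v, J v} := by
      ext t
      rw [Submodule.mem_span_pair, Submodule.mem_span_pair]
      constructor
      · rintro ⟨a, b, rfl⟩; exact ⟨-b, a, by module⟩
      · rintro ⟨a, b, rfl⟩; exact ⟨b, -a, by module⟩
    rw [hsp]
  · intro a b c d
    simp only [sh2, evalρ, huJ]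
    simpa only [sh2] using modelW1 (u v) (u a) (u b) (u c) (u d)
  · intro a b c d
    simp only [sh2, evalρ, huJ]
    simpa only [sh2] using modelW2 (u v) (u a) (u b) (u c) (u d)
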